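/- arXiv:2505.06383 — 4 statements merged into one kernel-verified Lean document; each statement's English description precedes it below -/
import Mathlib

section
/- For every real number φ with 0 < φ < 1 and every natural number n ≥ 1, the ratio R_{n,φ} := B_{n,φ}/A_{n,φ} satisfies the exact formula R_{n,φ} = 2/(1 − φ^n) − 2/(n(1 − φ)). -/
open Finset

lemma refl_sum (n : ℕ) (φ : ℝ) : ∑ j ∈ Icc 1 n, φ ^ (n+1-j) = ∑ k ∈ Icc 1 n, φ ^ k := by
  apply Finset.sum_nbij' (fun j => n+1-j) (fun k => n+1-k) <;> intros <;> simp_all [Finset.mem_Icc] <;> omega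

lemma geom_id (φ : ℝ) (n : ℕ) : (∑ k ∈ Icc 1 n, φ ^ k) * (1 - φ) = φ - φ ^ (n+1) := by
  induction n with
  | zero => simp
  | succ m ih =>
    rw [Finset.sum_Icc_succ_top (by omega)]
    have : φ ^ (m+1+1) = φ ^ (m+1) * φ := by ring
    nlinarith [ih]

private lemma D_id (φ : ℝ) (n : ℕ) :
    (∑ i ∈ Icc 1 n, ∑ j ∈ (Icc 1 n).erase i, φ ^ (((i : ℤ) - (j : ℤ)).natAbs)) * (1 - φ)
      = 2 * ((n : ℝ) * φ - ∑ k ∈ Icc 1 n, φ ^ k) := by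
  induction n with
  | zero => simp
  | succ m ih =>
    have hstep : (∑ i ∈ Icc 1 (m+1), ∑ j ∈ (Icc 1 (m+1)).erase i, φ ^ (((i : ℤ) - (j : ℤ)).natAbs))
        = (∑ i ∈ Icc 1 m, ∑ j ∈ (Icc 1 m).erase i, φ ^ (((i : ℤ) - (j : ℤ)).natAbs))
          + 2 * ∑ k ∈ Icc 1 m, φ ^ k := by
      rw [Finset.sum_Icc_succ_top (by omega : 1 ≤ m+1)]
      have h1 : (Icc 1 (m+1)).erase (m+1) = Icc 1 m := by
        rw [Finset.Icc_erase_right, Finset.Ico_add_one_right_eq_Icc]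
      have h2 : ∀ i ∈ Icc 1 m, (Icc 1 (m+1)).erase i = insert (m+1) ((Icc 1 m).erase i) := by
        intro i hi
        simp only [Finset.mem_Icc] at hi
        ext x
        simp only [Finset.mem_erase, Finset.mem_insert, Finset.mem_Icc]
        omega
      rw [Finset.sum_congr rfl (fun i hi => by rw [h2 i hi])]
      have h3 : ∀ i ∈ Icc 1 m,
          ∑ j ∈ insert (m+1) ((Icc 1 m).erase i), φ ^ (((i : ℤ) - (j : ℤ)).natAbs)
            = φ ^ (m+1-i) + ∑ j ∈ (Icc 1 m).erase i, φ ^ (((i : ℤ) - (j : ℤ)).natAbs) := by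
        intro i hi
        simp only [Finset.mem_Icc] at hi
        rw [Finset.sum_insert (by simp only [Finset.mem_erase, Finset.mem_Icc, not_and, not_le]; omega)]
        congr 2
        omega
      rw [Finset.sum_congr rfl h3, Finset.sum_add_distrib, h1]
      have h4 : ∀ j ∈ Icc 1 m, φ ^ ((((m+1 : ℕ) : ℤ) - (j : ℤ)).natAbs) = φ ^ (m+1-j) := by
        intro j hj
        simp only [Finset.mem_Icc] at hj
        congr 1
        omega
      rw [Finset.sum_congr rfl h4, refl_sum]
      ring
    rw [hstep, Finset.sum_Icc_succ_top (by omega : 1 ≤ m+1)]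
    have hg := geom_id φ m
    push_cast
    ring_nf
    ring_nf at ih hg
    nlinarith [ih, hg]
/-- For `0 < φ < 1` and `n ≥ 1`, the ratio `R_{n,φ} = B_{n,φ}/A_{n,φ}` satisfies the
exact formula `R_{n,φ} = 2/(1 - φ^n) - 2/(n(1 - φ))`. -/
theorem R_closed_form (φ : ℝ) (hφ0 : 0 < φ) (hφ1 : φ < 1) (n : ℕ) (hn : 1 ≤ n) :
    ((1 / (n : ℝ) ^ 2) *
        ∑ i ∈ Finset.Icc 1 n, ∑ j ∈ (Finset.Icc 1 n).erase i,
          φ ^ (((i : ℤ) - (j : ℤ)).natAbs)) /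
      ((1 / (n : ℝ)) * ∑ k ∈ Finset.Icc 1 n, φ ^ k) =
      2 / (1 - φ ^ n) - 2 / ((n : ℝ) * (1 - φ)) := by
  have nn : (n : ℝ) ≠ 0 := Nat.cast_ne_zero.mpr (by omega)
  set T := ∑ k ∈ Finset.Icc 1 n, φ ^ k with hTdef
  set D := ∑ i ∈ Finset.Icc 1 n, ∑ j ∈ (Finset.Icc 1 n).erase i,
      φ ^ (((i : ℤ) - (j : ℤ)).natAbs) with hDdef
  have h1φ : (1 : ℝ) - φ ≠ 0 := by linarith
  have hφn : (1 : ℝ) - φ ^ n ≠ 0 := by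
    have := pow_lt_one₀ hφ0.le hφ1 (by omega : n ≠ 0)
    linarith
  have hT := geom_id φ n
  have hD := D_id φ n
  have hTpos : 0 < T := Finset.sum_pos (fun k _ => pow_pos hφ0 k)
    ⟨1, Finset.mem_Icc.mpr ⟨le_refl 1, hn⟩⟩
  have hTne : T ≠ 0 := ne_of_gt hTpos
  have key : D * ((1 - φ ^ n) * (1 - φ)) = 2 * (n : ℝ) * T * (1 - φ) - 2 * T * (1 - φ ^ n) := by
    linear_combination (1 - φ ^ n) * hD - 2 * (n : ℝ) * hT
  have step : (1 / (n : ℝ) ^ 2 * D) / (1 / (n : ℝ) * T) = D / ((n : ℝ) * T) := by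
    field_simp
  rw [step, div_sub_div _ _ hφn (mul_ne_zero nn h1φ),
    div_eq_div_iff (mul_ne_zero nn hTne) (mul_ne_zero hφn (mul_ne_zero nn h1φ))]
  linear_combination (n : ℝ) * key
end

section
/- For every real number φ with 0 < φ < 1, the ratio R_{n,φ} := B_{n,φ}/A_{n,φ} converges to 2 as n → ∞. -/
open Finset Filter

noncomputable def S (φ : ℝ) (n : ℕ) : ℝ :=
  ∑ i ∈ Finset.Icc 1 n, ∑ j ∈ (Finset.Icc 1 n).erase i, φ ^ (((i:ℤ) - (j:ℤ)).natAbs)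

lemma Icc_ins (n : ℕ) : Finset.Icc 1 (n+1) = insert (n+1) (Finset.Icc 1 n) := by
  ext x; simp [Finset.mem_Icc]; omega

lemma reindex (φ : ℝ) (n : ℕ) :
    ∑ j ∈ Finset.Icc 1 n, φ ^ (n + 1 - j) = ∑ d ∈ Finset.Icc 1 n, φ ^ d := by
  apply Finset.sum_nbij' (fun j => n + 1 - j) (fun d => n + 1 - d) <;>
    simp [Finset.mem_Icc] <;> omega

lemma S_succ (φ : ℝ) (n : ℕ) :
    S φ (n+1) = S φ n + 2 * ∑ d ∈ Finset.Icc 1 n, φ ^ d := by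
  have hni : (n+1) ∉ Finset.Icc 1 n := by simp
  unfold S
  rw [Icc_ins, Finset.sum_insert hni, Finset.erase_insert hni]
  have h2 : ∀ i ∈ Finset.Icc 1 n,
      ∑ j ∈ (insert (n+1) (Finset.Icc 1 n)).erase i, φ ^ (((i:ℤ)-(j:ℤ)).natAbs)
        = φ ^ (n+1-i) + ∑ j ∈ (Finset.Icc 1 n).erase i, φ ^ (((i:ℤ)-(j:ℤ)).natAbs) := by
    intro i hi
    simp only [Finset.mem_Icc] at hi
    rw [Finset.erase_insert_of_ne (by omega : (n+1:ℕ) ≠ i),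
      Finset.sum_insert (fun h => hni (Finset.mem_of_mem_erase h))]
    congr 2
    push_cast
    omega
  rw [Finset.sum_congr rfl h2, Finset.sum_add_distrib]
  have h3 : ∑ j ∈ Finset.Icc 1 n, φ ^ ((((n:ℤ)+1) - (j:ℤ)).natAbs)
      = ∑ j ∈ Finset.Icc 1 n, φ ^ (n+1-j) := by
    apply Finset.sum_congr rfl
    intro j hj
    simp only [Finset.mem_Icc] at hj
    congr 1
    omega
  push_cast
  rw [h3, reindex]
  ring

lemma S_closed (φ : ℝ) (n : ℕ) :
    S φ (n+1) = 2 * ∑ d ∈ Finset.Icc 1 n, (((n:ℝ)+1) - d) * φ ^ d := by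
  induction n with
  | zero => simp [S]
  | succ n ih =>
      rw [S_succ, ih, Icc_ins]
      have hni : (n+1) ∉ Finset.Icc 1 n := by simp
      rw [Finset.sum_insert hni, Finset.sum_insert hni]
      push_cast
      have key : ∑ x ∈ Finset.Icc 1 n, ((n:ℝ)+1+1-x)*φ^x
          = ∑ x ∈ Finset.Icc 1 n, ((n:ℝ)+1-x)*φ^x + ∑ x ∈ Finset.Icc 1 n, φ^x := by
        rw [← Finset.sum_add_distrib]
        apply Finset.sum_congr rfl
        intros; ring
      rw [key]
      ring

lemma hP (φ : ℝ) (hφ0 : 0 < φ) (hφ1 : φ < 1) :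
    Tendsto (fun n : ℕ => ∑ d ∈ Finset.Icc 1 n, φ ^ d) atTop (nhds (φ / (1 - φ))) := by
  have h1 : Tendsto (fun n : ℕ => ∑ d ∈ Finset.range n, φ ^ d) atTop (nhds (1 - φ)⁻¹) :=
    (hasSum_geometric_of_lt_one hφ0.le hφ1).tendsto_sum_nat
  have h2 : Tendsto (fun n : ℕ => ∑ d ∈ Finset.range (n+1), φ ^ d) atTop (nhds (1 - φ)⁻¹) :=
    h1.comp (tendsto_add_atTop_nat 1)
  have h3 : ∀ n : ℕ, ∑ d ∈ Finset.Icc 1 n, φ ^ d = (∑ d ∈ Finset.range (n+1), φ ^ d) - 1 := by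
    intro n
    have : Finset.range (n+1) = insert 0 (Finset.Icc 1 n) := by
      ext x; simp [Finset.mem_Icc]; omega
    rw [this, Finset.sum_insert (by simp)]
    ring
  have hne : (1:ℝ) - φ ≠ 0 := by linarith
  have h4 : φ / (1 - φ) = (1 - φ)⁻¹ - 1 := by
    field_simp
    ring
  rw [h4]
  simp only [h3]
  exact h2.sub tendsto_const_nhds

lemma hQ (φ : ℝ) (hφ0 : 0 < φ) (hφ1 : φ < 1) :
    ∃ L : ℝ, Tendsto (fun n : ℕ => ∑ d ∈ Finset.Icc 1 n, (d:ℝ) * φ ^ d) atTop (nhds L) := by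
  have hs : Summable (fun d : ℕ => (d:ℝ) * φ ^ d) := by
    have := summable_pow_mul_geometric_of_norm_lt_one 1 (by
      rw [Real.norm_eq_abs, abs_of_pos hφ0]; exact hφ1) (R := ℝ)
    simpa using this
  refine ⟨∑' d : ℕ, (d:ℝ) * φ ^ d, ?_⟩
  have h1 := hs.hasSum.tendsto_sum_nat
  have h2 := h1.comp (tendsto_add_atTop_nat 1)
  have h3 : ∀ n : ℕ, ∑ d ∈ Finset.Icc 1 n, (d:ℝ) * φ ^ d
      = ∑ d ∈ Finset.range (n+1), (d:ℝ) * φ ^ d := by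
    intro n
    have : Finset.range (n+1) = insert 0 (Finset.Icc 1 n) := by
      ext x; simp [Finset.mem_Icc]; omega
    rw [this, Finset.sum_insert (by simp)]
    simp
  simp only [h3]
  exact h2

/-- For `0 < φ < 1`, the ratio `R_{n,φ} = B_{n,φ}/A_{n,φ}` converges to `2` as `n → ∞`. -/
theorem R_tendsto_two (φ : ℝ) (hφ0 : 0 < φ) (hφ1 : φ < 1) :
    Tendsto
      (fun n : ℕ =>
        ((1 / (n : ℝ) ^ 2) *
            ∑ i ∈ Finset.Icc 1 n, ∑ j ∈ (Finset.Icc 1 n).erase i,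
              φ ^ (((i : ℤ) - (j : ℤ)).natAbs)) /
          ((1 / (n : ℝ)) * ∑ k ∈ Finset.Icc 1 n, φ ^ k))
      atTop (nhds 2) := by
  set P : ℕ → ℝ := fun n => ∑ d ∈ Finset.Icc 1 n, φ ^ d with hPdef
  set Q : ℕ → ℝ := fun n => ∑ d ∈ Finset.Icc 1 n, (d:ℝ) * φ ^ d with hQdef
  obtain ⟨L, hL⟩ := hQ φ hφ0 hφ1
  have hPlim := hP φ hφ0 hφ1
  have hne : (1:ℝ) - φ ≠ 0 := by linarith
  have hL1 : φ / (1 - φ) ≠ 0 := by positivity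
  -- limit of S φ n / n
  have hSdiv : ∀ m : ℕ, S φ (m+1) / ((m:ℝ)+1)
      = 2 * (P m - Q m * (1/((m:ℝ)+1))) := by
    intro m
    have hm : ((m:ℝ)+1) ≠ 0 := by positivity
    rw [S_closed]
    have : ∑ d ∈ Finset.Icc 1 m, (((m:ℝ)+1) - d) * φ ^ d
        = ((m:ℝ)+1) * P m - Q m := by
      rw [hPdef, hQdef, Finset.mul_sum, ← Finset.sum_sub_distrib]
      apply Finset.sum_congr rfl
      intros; ring
    rw [this]
    field_simp
  have hN : Tendsto (fun n : ℕ => S φ n / (n:ℝ)) atTop (nhds (2 * (φ/(1-φ)))) := by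
    have hG : Tendsto (fun m : ℕ => 2 * (P m - Q m * (1/((m:ℝ)+1)))) atTop
        (nhds (2 * (φ/(1-φ) - L * 0))) := by
      apply Tendsto.const_mul
      apply hPlim.sub
      apply hL.mul
      have : Tendsto (fun m : ℕ => ((m:ℝ)+1)) atTop atTop := by
        apply tendsto_atTop_add_const_right
        exact tendsto_natCast_atTop_atTop
      simpa [Pi.inv_def] using this.inv_tendsto_atTop
    rw [show (2 * (φ/(1-φ) - L * 0)) = 2 * (φ/(1-φ)) by ring] at hG
    have := hG.comp (tendsto_sub_atTop_nat 1)
    apply this.congr'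
    filter_upwards [eventually_ge_atTop 1] with n hn
    obtain ⟨m, rfl⟩ := Nat.exists_eq_add_of_le hn
    simp only [Function.comp]
    rw [show 1 + m - 1 = m by omega, show 1 + m = m + 1 by omega]
    push_cast
    exact (hSdiv m).symm
  have hfinal := hN.div hPlim hL1
  have hval : (2 * (φ/(1-φ))) / (φ/(1-φ)) = 2 := by
    field_simp
  rw [hval] at hfinal
  apply hfinal.congr'
  filter_upwards [eventually_ge_atTop 1] with n hn
  have hn0 : (n:ℝ) ≠ 0 := by
    exact_mod_cast Nat.one_le_iff_ne_zero.mp hn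
  show S φ n / (n:ℝ) / P n = (1 / (n:ℝ)^2 * S φ n) / (1 / (n:ℝ) * P n)
  rw [show (1 / (n:ℝ)^2) * S φ n = (1/(n:ℝ)) * (S φ n / n) by field_simp]
  rw [mul_div_mul_left _ _ (one_div_ne_zero hn0)]
end

section
/- (Proposition 1, bias of the IID-resampled mean.) Let (Ω, P) be a probability space, let n ≥ 1, let γ > 0 and 0 ≤ φ < 1, and let R_1, …, R_{n+1} be square-integrable real random variables with Var(R_i) = σ_R² > 0 for all i and Cov(R_i, R_j) = σ_μ²·φ^{|i−j|} for all i ≠ j, where 0 ≤ σ_μ² ≤ σ_R². Define the rolling-window mean-variance weight w := (1/(γσ_R²))·(1/n)·Σ_{i=1}^{n} R_i. Then the bias of the IID-resampled backtested mean, namely −Cov(w, R_{n+1}), equals −(1/γ)·(σ_μ²/σ_R²)·A_{n,φ}, and it satisfies −(1/γ)·ψ ≤ −Cov(w, R_{n+1}) ≤ 0, where ψ := φ·σ_μ²/σ_R² is the first-lag autocorrelation of the returns and A_{n,φ} := (1/n)·Σ_{k=1}^{n} φ^k. -/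
open Finset MeasureTheory

/-- Covariance `Cov(X, Y) = E[(X - E[X])(Y - E[Y])]` of real random variables.
The variance of `X` is `cov μ X X`. -/
noncomputable def cov {Ω : Type*} [MeasurableSpace Ω] (μ : Measure Ω) (X Y : Ω → ℝ) : ℝ :=
  ∫ ω, (X ω - ∫ ω', X ω' ∂μ) * (Y ω - ∫ ω', Y ω' ∂μ) ∂μ

private lemma memℒp_mul_integrable {Ω : Type*} [MeasurableSpace Ω] {μ : Measure Ω}
    {f g : Ω → ℝ} (hf : MemLp f 2 μ) (hg : MemLp g 2 μ) :
    Integrable (fun ω => f ω * g ω) μ := by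
  have h : MemLp (f • g) 1 μ := by
    exact hg.smul hf
  rw [← memLp_one_iff_integrable]
  exact h

private lemma cov_const_mul {Ω : Type*} [MeasurableSpace Ω] (μ : Measure Ω)
    (c : ℝ) (f Y : Ω → ℝ) :
    cov μ (fun ω => c * f ω) Y = c * cov μ f Y := by
  unfold cov
  have e : ∀ ω, ((fun ω => c * f ω) ω - ∫ ω', (fun ω => c * f ω) ω' ∂μ) * (Y ω - ∫ ω', Y ω' ∂μ)
      = c * ((f ω - ∫ ω', f ω' ∂μ) * (Y ω - ∫ ω', Y ω' ∂μ)) := by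
    intro ω
    dsimp only
    rw [MeasureTheory.integral_const_mul]
    ring
  simp_rw [e, MeasureTheory.integral_const_mul]

private lemma cov_sum_left {Ω ι : Type*} [MeasurableSpace Ω] (μ : Measure Ω)
    [IsProbabilityMeasure μ] (s : Finset ι) (X : ι → Ω → ℝ) (Y : Ω → ℝ)
    (hX : ∀ i ∈ s, MemLp (X i) 2 μ) (hY : MemLp Y 2 μ) :
    cov μ (fun ω => ∑ i ∈ s, X i ω) Y = ∑ i ∈ s, cov μ (X i) Y := by
  unfold cov
  have hint : ∀ i ∈ s, Integrable (X i) μ := fun i hi => (hX i hi).integrable one_le_two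
  rw [integral_finset_sum s hint]
  have key : ∀ ω, (∑ i ∈ s, X i ω - ∑ i ∈ s, ∫ ω', X i ω' ∂μ) * (Y ω - ∫ ω', Y ω' ∂μ)
      = ∑ i ∈ s, (X i ω - ∫ ω', X i ω' ∂μ) * (Y ω - ∫ ω', Y ω' ∂μ) := by
    intro ω
    rw [← Finset.sum_sub_distrib, Finset.sum_mul]
  simp_rw [key]
  refine integral_finset_sum s fun i hi => ?_
  exact memℒp_mul_integrable ((hX i hi).sub (memLp_const _)) (hY.sub (memLp_const _))

/-- Proposition 1: the bias of the IID-resampled backtested mean of a rolling-window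
mean-variance portfolio, `−Cov(w, R_{n+1})` with `w = (1/(γσ_R²))·(1/n)∑_{i=1}^n R_i`,
equals `−(1/γ)(σ_μ²/σ_R²)A_{n,φ}` and satisfies `−(1/γ)ψ ≤ −Cov(w, R_{n+1}) ≤ 0`,
where `ψ = φσ_μ²/σ_R²` and `A_{n,φ} = (1/n)∑_{k=1}^n φ^k`. -/
theorem bias_resampled_mean {Ω : Type*} [MeasurableSpace Ω] (μ : Measure Ω)
    [IsProbabilityMeasure μ] (n : ℕ) (hn : 1 ≤ n) (γ φ : ℝ) (hγ : 0 < γ)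
    (hφ0 : 0 ≤ φ) (hφ1 : φ < 1) (R : ℕ → Ω → ℝ) (σR2 σμ2 : ℝ)
    (hσR2 : 0 < σR2) (hσμ2 : 0 ≤ σμ2) (hσμR : σμ2 ≤ σR2)
    (hL2 : ∀ i ∈ Finset.Icc 1 (n + 1), MemLp (R i) 2 μ)
    (hvar : ∀ i ∈ Finset.Icc 1 (n + 1), cov μ (R i) (R i) = σR2)
    (hcov : ∀ i ∈ Finset.Icc 1 (n + 1), ∀ j ∈ Finset.Icc 1 (n + 1), i ≠ j →
      cov μ (R i) (R j) = σμ2 * φ ^ (((i : ℤ) - (j : ℤ)).natAbs)) :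
    (-cov μ (fun ω => (1 / (γ * σR2)) * ((1 / (n : ℝ)) * ∑ i ∈ Finset.Icc 1 n, R i ω))
        (R (n + 1)) =
      -(1 / γ) * (σμ2 / σR2) * ((1 / (n : ℝ)) * ∑ k ∈ Finset.Icc 1 n, φ ^ k)) ∧
    (-(1 / γ) * (φ * σμ2 / σR2) ≤
      -cov μ (fun ω => (1 / (γ * σR2)) * ((1 / (n : ℝ)) * ∑ i ∈ Finset.Icc 1 n, R i ω))
        (R (n + 1))) ∧
    (-cov μ (fun ω => (1 / (γ * σR2)) * ((1 / (n : ℝ)) * ∑ i ∈ Finset.Icc 1 n, R i ω))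
        (R (n + 1)) ≤ 0) := by
  have hsub : ∀ i ∈ Finset.Icc 1 n, i ∈ Finset.Icc 1 (n + 1) := by
    intro i hi
    simp only [Finset.mem_Icc] at hi ⊢
    omega
  have hY : MemLp (R (n + 1)) 2 μ := hL2 (n + 1) (by simp)
  have hc1 : cov μ (fun ω => (1 / (γ * σR2)) * ((1 / (n : ℝ)) * ∑ i ∈ Finset.Icc 1 n, R i ω))
      (R (n + 1)) = (1 / (γ * σR2)) * ((1 / (n : ℝ)) *
        ∑ i ∈ Finset.Icc 1 n, cov μ (R i) (R (n + 1))) := by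
    rw [cov_const_mul]
    congr 1
    rw [cov_const_mul]
    congr 1
    exact cov_sum_left μ _ _ _ (fun i hi => hL2 i (hsub i hi)) hY
  have hc2 : ∑ i ∈ Finset.Icc 1 n, cov μ (R i) (R (n + 1))
      = σμ2 * ∑ k ∈ Finset.Icc 1 n, φ ^ k := by
    rw [Finset.mul_sum]
    refine Finset.sum_nbij' (fun i => n + 1 - i) (fun k => n + 1 - k) ?_ ?_ ?_ ?_ ?_
    · intro a ha; simp only [Finset.mem_Icc] at ha ⊢; omega
    · intro a ha; simp only [Finset.mem_Icc] at ha ⊢; omega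
    · intro a ha; simp only [Finset.mem_Icc] at ha; omega
    · intro a ha; simp only [Finset.mem_Icc] at ha; omega
    · intro a ha
      simp only [Finset.mem_Icc] at ha
      rw [hcov a (hsub a (Finset.mem_Icc.mpr ha)) (n + 1) (by simp) (by omega)]
      congr 2
      omega
  set S : ℝ := ∑ k ∈ Finset.Icc 1 n, φ ^ k with hSdef
  have hval : cov μ (fun ω => (1 / (γ * σR2)) * ((1 / (n : ℝ)) * ∑ i ∈ Finset.Icc 1 n, R i ω))
      (R (n + 1)) = (1 / γ) * (σμ2 / σR2) * ((1 / (n : ℝ)) * S) := by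
    rw [hc1, hc2]
    field_simp
  have hn0 : (0 : ℝ) < n := by exact_mod_cast hn
  have hS0 : 0 ≤ S := Finset.sum_nonneg fun k _ => pow_nonneg hφ0 k
  have hSle : S ≤ (n : ℝ) * φ := by
    calc S ≤ ∑ _k ∈ Finset.Icc 1 n, φ := by
          refine Finset.sum_le_sum fun k hk => ?_
          simp only [Finset.mem_Icc] at hk
          calc φ ^ k ≤ φ ^ 1 := pow_le_pow_of_le_one hφ0 hφ1.le hk.1
            _ = φ := pow_one φ
      _ = (n : ℝ) * φ := by simp [Nat.card_Icc]
  have hfac : 0 ≤ (1 / γ) * (σμ2 / σR2) := by positivity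
  have hA0 : 0 ≤ (1 / (n : ℝ)) * S := by positivity
  have hAφ : (1 / (n : ℝ)) * S ≤ φ := by
    rw [div_mul_eq_mul_div, one_mul, div_le_iff₀ hn0]
    linarith
  refine ⟨by rw [hval]; ring, ?_, ?_⟩
  · rw [hval]
    have h1 : (1 / γ) * (σμ2 / σR2) * ((1 / (n : ℝ)) * S)
        ≤ (1 / γ) * (σμ2 / σR2) * φ := mul_le_mul_of_nonneg_left hAφ hfac
    have h2 : (1 / γ) * (σμ2 / σR2) * φ = (1 / γ) * (φ * σμ2 / σR2) := by ring
    linarith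
  · rw [hval]
    have := mul_nonneg hfac hA0
    linarith
end

section
/- (Proposition 2, bound on the bias of the IID-resampled variance.) Let γ > 0, 0 ≤ φ < 1, n ≥ 1, θ ∈ ℝ, and 0 ≤ s ≤ 1, and set ψ := s·φ, A := A_{n,φ}, B := B_{n,φ}. Then the quantity E := −(1/γ²)·[(θ² + 1)·s·B + s·A·(s·A + 2θ²)] satisfies −(C/γ²)·ψ ≤ E ≤ 0, where C := 3θ² + ψ + 1. -/
open Finset

/-- Proposition 2: the bias of the IID-resampled backtested variance,
`E = −(1/γ²)[(θ²+1)·s·B + s·A·(s·A + 2θ²)]` with `s = σ_μ²/σ_R²`, `A = A_{n,φ}`,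
`B = B_{n,φ}`, satisfies `−(C/γ²)·ψ ≤ E ≤ 0` where `ψ = s·φ` and `C = 3θ² + ψ + 1`. -/
theorem bias_resampled_variance_bound (γ φ θ s : ℝ) (hγ : 0 < γ) (hφ0 : 0 ≤ φ)
    (hφ1 : φ < 1) (n : ℕ) (hn : 1 ≤ n) (hs0 : 0 ≤ s) (hs1 : s ≤ 1) :
    -((3 * θ ^ 2 + s * φ + 1) / γ ^ 2) * (s * φ) ≤
      -(1 / γ ^ 2) *
        ((θ ^ 2 + 1) * s *
            ((1 / (n : ℝ) ^ 2) *
              ∑ i ∈ Finset.Icc 1 n, ∑ j ∈ (Finset.Icc 1 n).erase i,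
                φ ^ (((i : ℤ) - (j : ℤ)).natAbs)) +
          s * ((1 / (n : ℝ)) * ∑ k ∈ Finset.Icc 1 n, φ ^ k) *
            (s * ((1 / (n : ℝ)) * ∑ k ∈ Finset.Icc 1 n, φ ^ k) + 2 * θ ^ 2)) ∧
    -(1 / γ ^ 2) *
        ((θ ^ 2 + 1) * s *
            ((1 / (n : ℝ) ^ 2) *
              ∑ i ∈ Finset.Icc 1 n, ∑ j ∈ (Finset.Icc 1 n).erase i,
                φ ^ (((i : ℤ) - (j : ℤ)).natAbs)) +
          s * ((1 / (n : ℝ)) * ∑ k ∈ Finset.Icc 1 n, φ ^ k) *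
            (s * ((1 / (n : ℝ)) * ∑ k ∈ Finset.Icc 1 n, φ ^ k) + 2 * θ ^ 2)) ≤ 0 := by
  have hnpos : (0 : ℝ) < (n : ℝ) := by exact_mod_cast Nat.lt_of_lt_of_le Nat.zero_lt_one hn
  set S1 : ℝ := ∑ i ∈ Finset.Icc 1 n, ∑ j ∈ (Finset.Icc 1 n).erase i,
      φ ^ (((i : ℤ) - (j : ℤ)).natAbs) with hS1def
  set S2 : ℝ := ∑ k ∈ Finset.Icc 1 n, φ ^ k with hS2def
  have hS1nn : 0 ≤ S1 := by
    apply Finset.sum_nonneg; intro i _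
    exact Finset.sum_nonneg fun j _ => pow_nonneg hφ0 _
  have hS2nn : 0 ≤ S2 := Finset.sum_nonneg fun k _ => pow_nonneg hφ0 _
  have hS2le : S2 ≤ (n : ℝ) * φ := by
    calc S2 ≤ ∑ k ∈ Finset.Icc 1 n, φ := by
          apply Finset.sum_le_sum; intro k hk
          have hk1 : 1 ≤ k := (Finset.mem_Icc.mp hk).1
          calc φ ^ k ≤ φ ^ 1 := pow_le_pow_of_le_one hφ0 hφ1.le hk1
            _ = φ := pow_one φ
      _ = (n : ℝ) * φ := by
          rw [Finset.sum_const, Nat.card_Icc]; simp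
  have hS1le : S1 ≤ (n : ℝ) ^ 2 * φ := by
    have h1 : S1 ≤ ∑ _i ∈ Finset.Icc 1 n, (n : ℝ) * φ := by
      apply Finset.sum_le_sum; intro i hi
      calc (∑ j ∈ (Finset.Icc 1 n).erase i, φ ^ (((i : ℤ) - (j : ℤ)).natAbs))
          ≤ ∑ j ∈ (Finset.Icc 1 n).erase i, φ := by
            apply Finset.sum_le_sum; intro j hj
            have hji : j ≠ i := (Finset.mem_erase.mp hj).1
            have h1 : 1 ≤ ((i : ℤ) - (j : ℤ)).natAbs := by omega
            calc φ ^ (((i : ℤ) - (j : ℤ)).natAbs) ≤ φ ^ 1 :=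
                  pow_le_pow_of_le_one hφ0 hφ1.le h1
              _ = φ := pow_one φ
        _ = ((Finset.Icc 1 n).erase i).card * φ := by
            rw [Finset.sum_const]; simp [mul_comm]
        _ ≤ (n : ℝ) * φ := by
            apply mul_le_mul_of_nonneg_right _ hφ0
            have := Finset.card_erase_le (a := i) (s := Finset.Icc 1 n)
            have hcard : (Finset.Icc 1 n).card = n := by rw [Nat.card_Icc]; omega
            exact_mod_cast le_trans this (le_of_eq hcard)
    calc S1 ≤ ∑ _i ∈ Finset.Icc 1 n, (n : ℝ) * φ := h1
      _ = (n : ℝ) ^ 2 * φ := by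
          rw [Finset.sum_const, Nat.card_Icc]
          have h : n + 1 - 1 = n := by omega
          rw [h, nsmul_eq_mul]; ring
  set A : ℝ := (1 / (n : ℝ)) * S2 with hAdef
  set B : ℝ := (1 / (n : ℝ) ^ 2) * S1 with hBdef
  have hA0 : 0 ≤ A := by positivity
  have hB0 : 0 ≤ B := by positivity
  have hAle : A ≤ φ := by
    rw [hAdef, div_mul_eq_mul_div, one_mul, div_le_iff₀ hnpos]
    linarith [hS2le]
  have hBle : B ≤ φ := by
    rw [hBdef, div_mul_eq_mul_div, one_mul, div_le_iff₀ (by positivity : (0:ℝ) < (n:ℝ)^2)]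
    linarith [hS1le]
  have hγ2 : (0 : ℝ) < γ ^ 2 := by positivity
  have hθ : (0 : ℝ) ≤ θ ^ 2 := sq_nonneg θ
  constructor
  · have key : (θ ^ 2 + 1) * s * B + s * A * (s * A + 2 * θ ^ 2)
        ≤ (3 * θ ^ 2 + s * φ + 1) * (s * φ) := by
      nlinarith [mul_le_mul_of_nonneg_left hAle hs0, mul_le_mul_of_nonneg_left hBle hs0,
        mul_nonneg hs0 hA0, mul_nonneg hs0 hφ0]
    have hinv : (0:ℝ) ≤ 1 / γ ^ 2 := by positivity
    have h2 : -((3 * θ ^ 2 + s * φ + 1) / γ ^ 2) * (s * φ)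
        = -(1 / γ ^ 2) * ((3 * θ ^ 2 + s * φ + 1) * (s * φ)) := by ring
    rw [h2]
    have h3 := mul_le_mul_of_nonneg_left key hinv
    linarith
  · have key : 0 ≤ (θ ^ 2 + 1) * s * B + s * A * (s * A + 2 * θ ^ 2) := by
      have h1 : 0 ≤ (θ ^ 2 + 1) * s * B := by positivity
      have h2 : 0 ≤ s * A * (s * A + 2 * θ ^ 2) := by positivity
      linarith
    have hinv : (0:ℝ) ≤ 1 / γ ^ 2 := by positivity
    have h3 := mul_nonneg hinv key
    linarith
end
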